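/- Assume the compatibility condition I_m^S·(M·b) = M·b holds. Then the particular solution x_p = (A')*·(M·b) is a minimum-norm solution: for every vector y with A·y = b, the Euclidean norm satisfies ‖x_p‖ ≤ ‖y‖. -/

import Mathlib

open Matrix

/-- The Euclidean norm of a vector in `ℂ^n`. -/
noncomputable def euclNorm {n : ℕ} (v : Fin n → ℂ) : ℝ :=
  ‖(WithLp.equiv 2 (Fin n → ℂ)).symm v‖

/-- Minimum-norm property of the row-based particular solution
`x_p = A'ᴴ (M b)`: it has Euclidean norm no larger than any solution of `A y = b`. -/
theorem row_particular_solution_min_norm {m n : ℕ}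
    (A : Matrix (Fin m) (Fin n) ℂ) (b : Fin m → ℂ)
    (M : Matrix (Fin m) (Fin m) ℂ) (hM : IsUnit M)
    (A' : Matrix (Fin m) (Fin n) ℂ) (hA' : A' = M * A)
    (S : Finset (Fin m))
    (hQO : A' * A'ᴴ = Matrix.diagonal (fun i => if i ∈ S then (1 : ℂ) else 0))
    (hcompat : (Matrix.diagonal (fun i => if i ∈ S then (1 : ℂ) else 0)) *ᵥ (M *ᵥ b)
      = M *ᵥ b) :
    ∀ y : Fin n → ℂ, A *ᵥ y = b → euclNorm (A'ᴴ *ᵥ (M *ᵥ b)) ≤ euclNorm y := by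
  intro y hy
  set c : Fin m → ℂ := M *ᵥ b with hc
  set xp : Fin n → ℂ := A'ᴴ *ᵥ c with hxp
  have hA'y : A' *ᵥ y = c := by
    rw [hA', ← Matrix.mulVec_mulVec, hy]
  have hxpc : A' *ᵥ xp = c := by
    rw [hxp, Matrix.mulVec_mulVec, hQO]
    exact hcompat
  have hz : A' *ᵥ (y - xp) = 0 := by
    rw [Matrix.mulVec_sub, hA'y, hxpc, sub_self]
  -- orthogonality
  have horth : (inner ℂ ((WithLp.equiv 2 (Fin n → ℂ)).symm xp)
      ((WithLp.equiv 2 (Fin n → ℂ)).symm (y - xp)) : ℂ) = 0 := by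
    have h1 : (inner ℂ ((WithLp.equiv 2 (Fin n → ℂ)).symm xp)
        ((WithLp.equiv 2 (Fin n → ℂ)).symm (y - xp)) : ℂ)
        = star xp ⬝ᵥ (y - xp) := by
      simp [PiLp.inner_apply, dotProduct, mul_comm, RCLike.inner_apply, -inner_sub_right, -WithLp.toLp_sub]
    rw [h1, hxp, Matrix.star_mulVec, Matrix.conjTranspose_conjTranspose,
      ← Matrix.dotProduct_mulVec, hz, dotProduct_zero]
  have hpyth : ‖(WithLp.equiv 2 (Fin n → ℂ)).symm xp +
      (WithLp.equiv 2 (Fin n → ℂ)).symm (y - xp)‖ * ‖(WithLp.equiv 2 (Fin n → ℂ)).symm xp +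
      (WithLp.equiv 2 (Fin n → ℂ)).symm (y - xp)‖
      = ‖(WithLp.equiv 2 (Fin n → ℂ)).symm xp‖ * ‖(WithLp.equiv 2 (Fin n → ℂ)).symm xp‖ +
        ‖(WithLp.equiv 2 (Fin n → ℂ)).symm (y - xp)‖ * ‖(WithLp.equiv 2 (Fin n → ℂ)).symm (y - xp)‖ :=
    norm_add_sq_eq_norm_sq_add_norm_sq_of_inner_eq_zero _ _ horth
  have hsum : (WithLp.equiv 2 (Fin n → ℂ)).symm xp +
      (WithLp.equiv 2 (Fin n → ℂ)).symm (y - xp)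
      = (WithLp.equiv 2 (Fin n → ℂ)).symm y := by
    ext i
    simp
  rw [hsum] at hpyth
  unfold euclNorm
  nlinarith [norm_nonneg ((WithLp.equiv 2 (Fin n → ℂ)).symm xp),
    norm_nonneg ((WithLp.equiv 2 (Fin n → ℂ)).symm y),
    norm_nonneg ((WithLp.equiv 2 (Fin n → ℂ)).symm (y - xp)),
    sq_nonneg (‖(WithLp.equiv 2 (Fin n → ℂ)).symm (y - xp)‖)]
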